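/- Let C be a small category with a coverage τ, and let F : C^op → Set be a τ-sheaf. Then the presheaf Hom_Ĉ(−, F) : Ĉ^op → Set satisfies descent along every τ-local epimorphism: for every τ-local epimorphism p : Y → X in Ĉ, the diagram Hom_Ĉ(X, F) → Hom_Ĉ(Y, F) ⇉ Hom_Ĉ(Y ×_X Y, F), with first map given by precomposition with p and the pair of maps given by precomposition with the two projections of the kernel pair of p, is an equalizer of sets. In particular, Hom_Ĉ(−, F) is a sheaf for the Grothendieck topology on Ĉ generated by the coverage τ̂ of τ-local epimorphisms. -/

import Mathlib

universe u

open CategoryTheory CategoryTheory.Limits Opposite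

/-- A family of morphisms `{fᵢ : cᵢ ⟶ c}` indexed by a (small) set. -/
structure CoverFamily (C : Type u) [CategoryTheory.SmallCategory C] (c : C) : Type (u + 1) where
  ι : Type u
  obj : ι → C
  map : ∀ i : ι, obj i ⟶ c

/-- A coverage (Grothendieck pretopology) in the sense of the paper:
identity families are coverings, and coverings admit weak pullbacks. -/
structure PaperCoverage (C : Type u) [CategoryTheory.SmallCategory C] : Type (u + 1) where
  covers : ∀ c : C, Set (CoverFamily C c)
  id_mem : ∀ c : C, (⟨PUnit, fun _ => c, fun _ => 𝟙 c⟩ : CoverFamily C c) ∈ covers c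
  pullback_compat : ∀ {c c' : C} (g : c' ⟶ c) (fam : CoverFamily C c), fam ∈ covers c →
    ∃ fam' ∈ covers c', ∀ j : fam'.ι, ∃ (i : fam.ι) (h : fam'.obj j ⟶ fam.obj i),
      h ≫ fam.map i = fam'.map j ≫ g

variable {C : Type u} [SmallCategory C]

/-- A morphism `π : Y ⟶ X` of presheaves is a `τ`-local epimorphism if every
morphism `y(c) ⟶ X` admits local lifts through `π` along some covering family of `c`. -/
def IsLocalEpi (τ : PaperCoverage C) {Y X : Cᵒᵖ ⥤ Type u} (π : Y ⟶ X) : Prop :=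
  ∀ (c : C) (φ : yoneda.obj c ⟶ X),
    ∃ fam ∈ τ.covers c, ∀ j : fam.ι,
      ∃ φj : yoneda.obj (fam.obj j) ⟶ Y, φj ≫ π = yoneda.map (fam.map j) ≫ φ

/-- The Mathlib coverage on `C` associated to a paper-style coverage `τ`:
its covering presieves are the presieves generated by the covering families of `τ`. -/
def PaperCoverage.toCoverage (τ : PaperCoverage C) : Coverage C where
  coverings c := { S | ∃ fam ∈ τ.covers c, S = Presieve.ofArrows fam.obj fam.map }
  pullback := by
    rintro c c' g S ⟨fam, hfam, rfl⟩
    obtain ⟨fam', hfam', H⟩ := τ.pullback_compat g fam hfam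
    refine ⟨Presieve.ofArrows fam'.obj fam'.map, ⟨fam', hfam', rfl⟩, ?_⟩
    rintro Z h ⟨j⟩
    obtain ⟨i, k, hk⟩ := H j
    exact ⟨fam.obj i, k, fam.map i, Presieve.ofArrows.mk i, hk⟩

/-- The Grothendieck topology on `C` generated by the coverage `τ`. -/
def PaperCoverage.topology (τ : PaperCoverage C) : GrothendieckTopology C :=
  τ.toCoverage.toGrothendieck

/-- The coverage `τ̂` on `Ĉ` whose covering families are the singleton families
`{π : Y ⟶ X}` with `π` a τ-local epimorphism. -/
def hatCoverage (τ : PaperCoverage C) : Coverage (Cᵒᵖ ⥤ Type u) where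
  coverings X := { S | ∃ (Y : Cᵒᵖ ⥤ Type u) (π : Y ⟶ X),
    IsLocalEpi τ π ∧ S = Presieve.singleton π }
  pullback := by
    rintro X Z g S ⟨Y, π, hπ, rfl⟩
    have hfst : IsLocalEpi τ (pullback.fst g π) := by
      intro c φ
      obtain ⟨fam, hfam, H⟩ := hπ c (φ ≫ g)
      refine ⟨fam, hfam, fun j => ?_⟩
      obtain ⟨φj, hφj⟩ := H j
      refine ⟨pullback.lift (yoneda.map (fam.map j) ≫ φ) φj ?_, ?_⟩
      · rw [Category.assoc, ← hφj]
      · exact pullback.lift_fst _ _ _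
    refine ⟨Presieve.singleton (pullback.fst g π),
      ⟨pullback g π, pullback.fst g π, hfst, rfl⟩, ?_⟩
    rintro W h ⟨⟩
    exact ⟨_, pullback.snd g π, π, Presieve.singleton.mk, pullback.condition.symm⟩

/-- The Grothendieck topology on `Ĉ` generated by the coverage `τ̂` of
τ-local epimorphisms. -/
def hatTopology (τ : PaperCoverage C) : GrothendieckTopology (Cᵒᵖ ⥤ Type u) :=
  (hatCoverage τ).toGrothendieck

/-- A presheaf of sets `G` on `Ĉ` is limit-preserving if it sends colimits in `Ĉ` to
limits in `Set`: for every small diagram `D`, the cone obtained by applying `G` to the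
colimit cocone of `D` is a limit cone (i.e. the canonical map
`G(colim D) ⟶ lim G(D(j))` is a bijection). -/
def LimitPreserving (G : (Cᵒᵖ ⥤ Type u)ᵒᵖ ⥤ Type u) : Prop :=
  ∀ (J : Type u) (_ : SmallCategory J) (D : J ⥤ Cᵒᵖ ⥤ Type u),
    Nonempty (IsLimit (G.mapCone (colimit.cocone D).op))

/-- If `F` is a τ-sheaf on `C`, then the presheaf `Hom_Ĉ(−, F)` on `Ĉ`
satisfies descent along every τ-local epimorphism: for every τ-local epimorphism
`p : Y ⟶ X`, the diagram `Hom(X,F) → Hom(Y,F) ⇉ Hom(Y ×_X Y, F)` is an equalizer of sets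
(expressed elementwise by unique gluing). In particular, `Hom_Ĉ(−, F)` is a sheaf for the
Grothendieck topology on `Ĉ` generated by the coverage `τ̂` of τ-local epimorphisms. -/
theorem homPresheaf_isSheaf_hatTopology (τ : PaperCoverage C) (F : Cᵒᵖ ⥤ Type u)
    (hF : Presieve.IsSheaf τ.topology F) :
    (∀ {Y X : Cᵒᵖ ⥤ Type u} (p : Y ⟶ X), IsLocalEpi τ p →
      ∀ t : Y ⟶ F, pullback.fst p p ≫ t = pullback.snd p p ≫ t →
        ∃! s : X ⟶ F, p ≫ s = t) ∧
    Presieve.IsSheaf (hatTopology τ) (yoneda.obj F) := by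
    classical
  have hF' : ∀ {c : C} (fam : CoverFamily C c), fam ∈ τ.covers c →
      ∀ (x : ∀ i, F.obj (op (fam.obj i))), Presieve.Arrows.Compatible F fam.map x →
        ∃! a, ∀ i, F.map (fam.map i).op a = x i := by
    intro c fam hfam
    exact (Presieve.isSheafFor_arrows_iff _ _).mp
      ((Presieve.isSheaf_coverage τ.toCoverage F).mp hF _ ⟨fam, hfam, rfl⟩)
  have sep : ∀ {c : C} (fam : CoverFamily C c), fam ∈ τ.covers c →
      ∀ a b : F.obj (op c), (∀ j, F.map (fam.map j).op a = F.map (fam.map j).op b) →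
        a = b := by
    intro c fam hfam a b h
    have hcomp : Presieve.Arrows.Compatible F fam.map (fun j => F.map (fam.map j).op a) := by
      intro i j Z gi gj hg
      rw [← FunctorToTypes.map_comp_apply, ← FunctorToTypes.map_comp_apply,
        ← op_comp, ← op_comp, hg]
    obtain ⟨u, hu, huniq⟩ := hF' fam hfam _ hcomp
    rw [huniq a fun i => rfl, huniq b fun i => (h i).symm]
  have main : ∀ {Y X : Cᵒᵖ ⥤ Type u} (p : Y ⟶ X), IsLocalEpi τ p →
      ∀ t : Y ⟶ F, pullback.fst p p ≫ t = pullback.snd p p ≫ t →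
        ∃! s : X ⟶ F, p ≫ s = t := by
    intro Y X p hp t ht
    have eqt : ∀ {d : C} (ψ₁ ψ₂ : yoneda.obj d ⟶ Y), ψ₁ ≫ p = ψ₂ ≫ p →
        ψ₁ ≫ t = ψ₂ ≫ t := by
      intro d ψ₁ ψ₂ h
      have := pullback.lift ψ₁ ψ₂ h ≫= ht
      simpa only [← Category.assoc, pullback.lift_fst, pullback.lift_snd] using this
    choose fam hfam H using hp
    choose lifts hlifts using H
    have compat : ∀ (c : C) (φ : yoneda.obj c ⟶ X),
        Presieve.Arrows.Compatible F (fam c φ).map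
          (fun i => yonedaEquiv (lifts c φ i ≫ t)) := by
      intro c φ i j Z gi gj hg
      simp only [yonedaEquiv_naturality]
      congr 1
      simp only [← Category.assoc]
      apply eqt
      simp only [Category.assoc, hlifts]
      simp only [← Category.assoc, ← yoneda.map_comp, hg]
    choose glue hglue huniq using fun (c : C) (φ : yoneda.obj c ⟶ X) =>
      hF' (fam c φ) (hfam c φ) _ (compat c φ)
    have keyB : ∀ (c : C) (φ : yoneda.obj c ⟶ X) (d : C) (h : d ⟶ c)
        (ψ : yoneda.obj d ⟶ Y), ψ ≫ p = yoneda.map h ≫ φ →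
        F.map h.op (glue c φ) = yonedaEquiv (ψ ≫ t) := by
      intro c φ d h ψ hψ
      obtain ⟨fam'', hfam'', H''⟩ := τ.pullback_compat h (fam c φ) (hfam c φ)
      refine sep fam'' hfam'' _ _ fun j => ?_
      obtain ⟨i, k, hk⟩ := H'' j
      rw [← FunctorToTypes.map_comp_apply, ← op_comp, ← hk, op_comp,
        FunctorToTypes.map_comp_apply, hglue]
      simp only [yonedaEquiv_naturality]
      congr 1
      simp only [← Category.assoc]
      apply eqt
      simp only [Category.assoc, hlifts, hψ]
      simp only [← Category.assoc, ← yoneda.map_comp, hk]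
    have keyC : ∀ (c : C) (φ : yoneda.obj c ⟶ X) (d : C) (h : d ⟶ c),
        glue d (yoneda.map h ≫ φ) = F.map h.op (glue c φ) := by
      intro c φ d h
      refine sep (fam d (yoneda.map h ≫ φ)) (hfam d _) _ _ fun j => ?_
      rw [hglue, ← FunctorToTypes.map_comp_apply, ← op_comp]
      refine (keyB c φ _ ((fam d (yoneda.map h ≫ φ)).map j ≫ h)
        (lifts d (yoneda.map h ≫ φ) j) ?_).symm
      rw [hlifts, Functor.map_comp, Category.assoc]
    refine ⟨⟨fun c => TypeCat.ofHom (fun x => glue c.unop (yonedaEquiv.symm x)), ?_⟩, ?_, ?_⟩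
    · intro c c' f
      ext x
      show glue c'.unop (yonedaEquiv.symm (X.map f x))
        = F.map f (glue c.unop (yonedaEquiv.symm x))
      have h1 : yonedaEquiv.symm (X.map f x) = yoneda.map f.unop ≫ yonedaEquiv.symm x := by
        apply yonedaEquiv.injective
        rw [Equiv.apply_symm_apply, ← yonedaEquiv_naturality, Equiv.apply_symm_apply]
        rfl
      rw [h1, keyC]
      rfl
    · ext c y
      show glue c.unop (yonedaEquiv.symm (p.app c y)) = t.app c y
      have h1 : yonedaEquiv.symm (p.app c y) = yonedaEquiv.symm y ≫ p := by
        apply yonedaEquiv.injective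
        rw [Equiv.apply_symm_apply, yonedaEquiv_comp, Equiv.apply_symm_apply]
      have h2 := keyB c.unop (yonedaEquiv.symm y ≫ p) c.unop (𝟙 c.unop)
        (yonedaEquiv.symm y) (by simp)
      rw [h1]
      simp only [op_id, FunctorToTypes.map_id_apply] at h2
      rw [h2, yonedaEquiv_comp, Equiv.apply_symm_apply]
    · intro s' hs'
      ext c x
      show s'.app c x = glue c.unop (yonedaEquiv.symm x)
      refine huniq c.unop (yonedaEquiv.symm x) _ fun i => ?_
      rw [← hs', ← Category.assoc, hlifts, Category.assoc,
        ← yonedaEquiv_naturality, yonedaEquiv_comp, Equiv.apply_symm_apply]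
  refine ⟨main, ?_⟩
  rw [hatTopology, Presieve.isSheaf_coverage]
  rintro X S ⟨Y, π, hπ, rfl⟩
  intro x hx
  have hteq : pullback.fst π π ≫ x π Presieve.singleton.mk
      = pullback.snd π π ≫ x π Presieve.singleton.mk :=
    hx (pullback.fst π π) (pullback.snd π π) Presieve.singleton.mk
      Presieve.singleton.mk pullback.condition
  obtain ⟨s, hs, huniq⟩ := main π hπ (x π Presieve.singleton.mk) hteq
  refine ⟨s, ?_, ?_⟩
  · rintro Z g ⟨⟩
    exact hs
  · intro s' hs'
    exact huniq s' (hs' π Presieve.singleton.mk)
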